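/- Let b be a smooth symmetric (0,2)-tensor field on a Riemannian manifold whose Codazzi deviation has the pure-trace form 𝒞(X,Y,Z) = λ(X) g(Y,Z) − λ(Y) g(X,Z) for some 1-form λ, on a manifold of dimension n ≥ 3. Then b is Riemann compatible if and only if λ is closed. -/
import Mathlib


open RealInnerProductSpace

/-!
Pointwise formalization on a Riemannian manifold of dimension `n ≥ 3` (vector fields at
a point modelled on a finite-dimensional real inner product space; Mathlib does not yet
provide the Levi-Civita connection).  `b` is the symmetric `(0,2)`-tensor,
`Db X Y Z = (∇_X b)(Y,Z)`, `DDb X Y Z W = (∇²_{X,Y} b)(Z,W)`, `lam` is the 1-form `λ`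
and `Dlam X Y = (∇_X λ)(Y)` (so `λ` is closed iff `Dlam` is symmetric, by
torsion-freeness), and `R X Y Z = R(X,Y)Z` is the curvature.  The Codazzi deviation of
`b` has the pure-trace form `𝒞(X,Y,Z) = λ(X) g(Y,Z) − λ(Y) g(X,Z)`.
-/

/-- If the Codazzi deviation of a symmetric `(0,2)`-tensor `b` has the pure-trace form
`𝒞(X,Y,Z) = λ(X) g(Y,Z) − λ(Y) g(X,Z)` on a manifold of dimension `n ≥ 3`, then `b` is
Riemann compatible if and only if `λ` is closed. -/
theorem riemann_compatible_iff_lambda_closed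
    {V : Type*} [NormedAddCommGroup V] [InnerProductSpace ℝ V] [FiniteDimensional ℝ V]
    (hdim : 3 ≤ Module.finrank ℝ V)
    (b : V →ₗ[ℝ] V →ₗ[ℝ] ℝ)
    (hbsymm : ∀ X Y : V, b X Y = b Y X)
    (R : V → V → V → V)
    (hbianchi : ∀ X Y Z : V, R X Y Z + R Y Z X + R Z X Y = 0)
    (lam : V → ℝ) (Dlam : V →ₗ[ℝ] V →ₗ[ℝ] ℝ)
    (Db : V → V → V → ℝ)
    (DDb : V → V → V → V → ℝ)
    -- Ricci identity for the second covariant derivative of `b`: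
    (hricci : ∀ X Y Z W : V,
      DDb X Y Z W - DDb Y X Z W = b (R X Y Z) W + b Z (R X Y W))
    -- the pure-trace form of the Codazzi deviation:
    (hpure : ∀ X Y Z : V,
      Db X Y Z - Db Y X Z = lam X * ⟪Y, Z⟫ - lam Y * ⟪X, Z⟫)
    -- Leibniz rule: `(∇_W 𝒞)(X,Y,Z)` computed from the pure-trace form (`∇g = 0`):
    (hleibniz : ∀ W X Y Z : V,
      DDb W X Y Z - DDb W Y X Z = Dlam W X * ⟪Y, Z⟫ - Dlam W Y * ⟪X, Z⟫) :
    (∀ X Y Z W : V, b (R Y Z W) X + b (R Z X W) Y + b (R X Y W) Z = 0) ↔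
      (∀ X Y : V, Dlam X Y = Dlam Y X) := by

  -- Key identity from Ricci + Leibniz + Bianchi
  have key : ∀ X Y Z W : V,
      b X (R Y Z W) + b Y (R Z X W) + b Z (R X Y W) =
        (Dlam Y Z - Dlam Z Y) * ⟪X, W⟫ + (Dlam Z X - Dlam X Z) * ⟪Y, W⟫ +
          (Dlam X Y - Dlam Y X) * ⟪Z, W⟫ := by
    intro X Y Z W
    have h0 : b (R X Y Z) W + b (R Y Z X) W + b (R Z X Y) W = 0 := by
      have h := hbianchi X Y Z
      have : b (R X Y Z + R Y Z X + R Z X Y) W = 0 := by rw [h]; simp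
      simpa [map_add, LinearMap.add_apply] using this
    have r1 := hricci X Y Z W
    have r2 := hricci Y Z X W
    have r3 := hricci Z X Y W
    have l1 := hleibniz X Y Z W
    have l2 := hleibniz Y Z X W
    have l3 := hleibniz Z X Y W
    linarith
  constructor
  · intro hcomp X Y
    -- scalar identity with free Z, W
    have hscalar : ∀ Z W : V,
        (Dlam Y Z - Dlam Z Y) * ⟪X, W⟫ + (Dlam Z X - Dlam X Z) * ⟪Y, W⟫ +
          (Dlam X Y - Dlam Y X) * ⟪Z, W⟫ = 0 := by
      intro Z W
      have hc := hcomp X Y Z W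
      have hk := key X Y Z W
      rw [hbsymm (R Y Z W) X, hbsymm (R Z X W) Y, hbsymm (R X Y W) Z] at hc
      linarith
    -- vector identity
    have hvec : ∀ Z : V,
        (Dlam Y Z - Dlam Z Y) • X + (Dlam Z X - Dlam X Z) • Y +
          (Dlam X Y - Dlam Y X) • Z = 0 := by
      intro Z
      set v := (Dlam Y Z - Dlam Z Y) • X + (Dlam Z X - Dlam X Z) • Y +
          (Dlam X Y - Dlam Y X) • Z with hv
      have hiv : ∀ W : V, ⟪v, W⟫ = 0 := by
        intro W
        rw [hv]
        simp only [inner_add_left, real_inner_smul_left]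
        exact hscalar Z W
      have := hiv v
      exact inner_self_eq_zero.mp this
    -- choose Z outside span {X, Y}
    have hspan : Submodule.span ℝ ({X, Y} : Set V) ≠ ⊤ := by
      intro htop
      have h1 : Module.finrank ℝ (Submodule.span ℝ ({X, Y} : Set V)) ≤ 2 := by
        classical
        have h2 := finrank_span_finset_le_card (R := ℝ) ({X, Y} : Finset V)
        have hco : ((({X, Y} : Finset V) : Set V)) = ({X, Y} : Set V) := by simp
        rw [Set.finrank, hco] at h2
        exact h2.trans (le_trans (Finset.card_insert_le _ _) (by simp))
      rw [htop, finrank_top] at h1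
      omega
    obtain ⟨Z, hZ⟩ : ∃ Z : V, Z ∉ Submodule.span ℝ ({X, Y} : Set V) := by
      by_contra h
      push_neg at h
      exact hspan (Submodule.eq_top_iff'.mpr h)
    by_contra hne
    have hc : Dlam X Y - Dlam Y X ≠ 0 := sub_ne_zero.mpr hne
    have h := hvec Z
    have hZmem : Z ∈ Submodule.span ℝ ({X, Y} : Set V) := by
      have hZeq : Z = (Dlam X Y - Dlam Y X)⁻¹ •
          (-((Dlam Y Z - Dlam Z Y) • X + (Dlam Z X - Dlam X Z) • Y)) := by
        have h2 : (Dlam X Y - Dlam Y X) • Z =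
            -((Dlam Y Z - Dlam Z Y) • X + (Dlam Z X - Dlam X Z) • Y) := by
          linear_combination (norm := module) h
        rw [← h2, smul_smul, inv_mul_cancel₀ hc, one_smul]
      rw [hZeq]
      have hX : X ∈ Submodule.span ℝ ({X, Y} : Set V) :=
        Submodule.subset_span (by simp)
      have hY : Y ∈ Submodule.span ℝ ({X, Y} : Set V) :=
        Submodule.subset_span (by simp)
      exact Submodule.smul_mem _ _ (Submodule.neg_mem _
        (Submodule.add_mem _ (Submodule.smul_mem _ _ hX) (Submodule.smul_mem _ _ hY)))
    exact hZ hZmem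
  · intro hsym X Y Z W
    have hk := key X Y Z W
    rw [hbsymm (R Y Z W) X, hbsymm (R Z X W) Y, hbsymm (R X Y W) Z]
    rw [hk, hsym Y Z, hsym Z X, hsym X Y]
    ring
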